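/- arXiv:1210.2933 — 2 statements merged into one kernel-verified Lean document; each statement's English description precedes it below -/
import Mathlib

section
/- Let n ≥ 1, let V : ℝⁿ → ℝ be continuously differentiable with V(x) ≥ 0 for all x, let b : ℝⁿ × ℝ → ℝⁿ, and suppose there exist constants C > 0 and R₀ > 0 such that ⟨∇V(x), b(x,t)⟩ ≤ −C·V(x) for all t and all x with ‖x‖ ≥ R₀. Let x : [0,T] → ℝⁿ be differentiable with x'(t) = b(x(t), t) for all t ∈ [0,T]. Then for all t ∈ [0,T]: V(x(t)) ≤ max( V(x(0)), sup{ V(y) : ‖y‖ ≤ R₀ } ). -/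
open Set

/-- Boundedness consequence of dissipativity (Definition 1) in the deterministic
case: if `⟨∇V(x), b(x,t)⟩ ≤ −C·V(x)` outside the ball of radius `R₀`, then along
any solution of `x' = b(x,t)` the Lyapunov function is bounded by the larger of
its initial value and its supremum on that ball. -/
theorem stmt_10 (n : ℕ) (hn : 1 ≤ n)
    (V : EuclideanSpace ℝ (Fin n) → ℝ) (hV : ContDiff ℝ 1 V)
    (hVpos : ∀ x, 0 ≤ V x)
    (b : EuclideanSpace ℝ (Fin n) → ℝ → EuclideanSpace ℝ (Fin n))
    (C R₀ : ℝ) (hC : 0 < C) (hR₀ : 0 < R₀)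
    (hdiss : ∀ t : ℝ, ∀ x : EuclideanSpace ℝ (Fin n), R₀ ≤ ‖x‖ →
      inner ℝ (gradient V x) (b x t) ≤ -C * V x)
    (T : ℝ) (x : ℝ → EuclideanSpace ℝ (Fin n))
    (hx : Differentiable ℝ x)
    (hxeq : ∀ t ∈ Icc (0 : ℝ) T, deriv x t = b (x t) t) :
    ∀ t ∈ Icc (0 : ℝ) T,
      V (x t) ≤ max (V (x 0)) (sSup (V '' Metric.closedBall 0 R₀)) := by
  set M : ℝ := max (V (x 0)) (sSup (V '' Metric.closedBall 0 R₀)) with hM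
  have hVdiff : Differentiable ℝ V := hV.differentiable one_ne_zero
  set g : ℝ → ℝ := fun t => V (x t) with hgdef
  have hgdiff : Differentiable ℝ g := hVdiff.comp hx
  have hbdd : BddAbove (V '' Metric.closedBall (0 : EuclideanSpace ℝ (Fin n)) R₀) :=
    (isCompact_closedBall _ _).bddAbove_image hV.continuous.continuousOn
  have hball : ∀ y : EuclideanSpace ℝ (Fin n), ‖y‖ ≤ R₀ → V y ≤ M := by
    intro y hy
    refine le_max_of_le_right (le_csSup hbdd ⟨y, ?_, rfl⟩)
    simpa [Metric.mem_closedBall, dist_eq_norm] using hy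
  -- derivative formula
  have hderiv : ∀ t, deriv g t = inner ℝ (gradient V (x t)) (deriv x t) := by
    intro t
    have hx' : HasDerivAt x (deriv x t) t := (hx t).hasDerivAt
    have hF : HasFDerivAt V (fderiv ℝ V (x t)) (x t) := (hVdiff (x t)).hasFDerivAt
    have : HasDerivAt g (fderiv ℝ V (x t) (deriv x t)) t := hF.comp_hasDerivAt t hx'
    rw [this.deriv]
    have hgrad : (InnerProductSpace.toDual ℝ _) (gradient V (x t)) = fderiv ℝ V (x t) := by
      simp [gradient]
    rw [← hgrad, InnerProductSpace.toDual_apply_apply]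
  by_contra hcon
  push_neg at hcon
  obtain ⟨t₁, ht₁, hgt₁⟩ := hcon
  -- the set of times before t₁ where g ≤ M
  set A : Set ℝ := {t | t ∈ Icc (0 : ℝ) t₁ ∧ g t ≤ M} with hA
  have h0A : (0 : ℝ) ∈ A := by
    refine ⟨⟨le_refl 0, ht₁.1⟩, le_max_left _ _⟩
  have hAne : A.Nonempty := ⟨0, h0A⟩
  have hAbdd : BddAbove A := ⟨t₁, fun t ht => ht.1.2⟩
  have hAclosed : IsClosed A := by
    have : A = Icc 0 t₁ ∩ g ⁻¹' (Iic M) := by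
      ext t; simp [hA, and_assoc]
    rw [this]
    exact isClosed_Icc.inter (isClosed_Iic.preimage hgdiff.continuous)
  set s : ℝ := sSup A with hs
  have hsA : s ∈ A := hAclosed.csSup_mem hAne hAbdd
  have hs0 : 0 ≤ s := hsA.1.1
  have hst₁ : s < t₁ := lt_of_le_of_ne hsA.1.2 (by
    intro h; exact absurd hsA.2 (by rw [h]; exact not_le.mpr hgt₁))
  -- on (s, t₁), g > M hence ‖x t‖ > R₀ hence deriv g ≤ 0
  have hgt : ∀ t ∈ Ioo s t₁, M < g t := by
    intro t ht
    by_contra h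
    push_neg at h
    have : t ∈ A := ⟨⟨hs0.trans ht.1.le, ht.2.le⟩, h⟩
    exact absurd (le_csSup hAbdd this) (not_le.mpr ht.1)
  have hderiv_nonpos : ∀ t ∈ Ioo s t₁, deriv g t ≤ 0 := by
    intro t ht
    have htT : t ∈ Icc (0 : ℝ) T := ⟨hs0.trans ht.1.le, ht.2.le.trans ht₁.2⟩
    have hnorm : R₀ ≤ ‖x t‖ := by
      by_contra h
      push_neg at h
      exact absurd (hball (x t) h.le) (not_le.mpr (hgt t ht))
    calc deriv g t = inner ℝ (gradient V (x t)) (deriv x t) := hderiv t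
      _ = inner ℝ (gradient V (x t)) (b (x t) t) := by rw [hxeq t htT]
      _ ≤ -C * V (x t) := hdiss t (x t) hnorm
      _ ≤ 0 := mul_nonpos_of_nonpos_of_nonneg (neg_nonpos.mpr hC.le) (hVpos _)
  have hanti : AntitoneOn g (Icc s t₁) := by
    refine antitoneOn_of_deriv_nonpos (convex_Icc s t₁)
      hgdiff.continuous.continuousOn ?_ ?_
    · exact hgdiff.differentiableOn
    · intro t ht
      rw [interior_Icc] at ht
      exact hderiv_nonpos t ht
  have : g t₁ ≤ g s :=
    hanti (left_mem_Icc.mpr hst₁.le) (right_mem_Icc.mpr hst₁.le) hst₁.le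
  exact absurd (this.trans hsA.2) (not_le.mpr hgt₁)
end

section
/- Let a > 0, b, c ∈ ℝ, let h : ℝ → ℝ be continuous, let x₀ ∈ ℝ and T > 0. Then there exists a unique differentiable function x : [0,T] → ℝ with x(0) = x₀ and x'(t) = −a·x(t)³ − b·x(t)² − c·x(t) + h(t) for all t ∈ [0,T]. -/
open Set Metric

/-- Lipschitz estimate for the cubic drift on a bounded set. -/
lemma cubicLip (a b c M : ℝ) (ha : 0 ≤ a) {p q : ℝ} (hp : |p| ≤ M) (hq : |q| ≤ M) :
    |(-a * p ^ 3 - b * p ^ 2 - c * p) - (-a * q ^ 3 - b * q ^ 2 - c * q)| ≤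
      (3 * a * M ^ 2 + 2 * |b| * M + |c|) * |p - q| := by
  have hM : 0 ≤ M := (abs_nonneg p).trans hp
  have h1 : (-a * p ^ 3 - b * p ^ 2 - c * p) - (-a * q ^ 3 - b * q ^ 2 - c * q) =
      (p - q) * (-(a * (p ^ 2 + p * q + q ^ 2) + b * (p + q) + c)) := by ring
  rw [h1, abs_mul, abs_neg, mul_comm]
  apply mul_le_mul_of_nonneg_right _ (abs_nonneg _)
  calc |a * (p ^ 2 + p * q + q ^ 2) + b * (p + q) + c|
      ≤ |a * (p ^ 2 + p * q + q ^ 2)| + |b * (p + q)| + |c| := abs_add_three _ _ _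
    _ = a * |p ^ 2 + p * q + q ^ 2| + |b| * |p + q| + |c| := by
        rw [abs_mul, abs_mul, abs_of_nonneg ha]
    _ ≤ a * (3 * M ^ 2) + |b| * (2 * M) + |c| := by
        have h2 : |p ^ 2 + p * q + q ^ 2| ≤ 3 * M ^ 2 := by
          calc |p ^ 2 + p * q + q ^ 2| ≤ |p ^ 2| + |p * q| + |q ^ 2| := abs_add_three _ _ _
            _ = |p| ^ 2 + |p| * |q| + |q| ^ 2 := by rw [abs_mul, abs_pow, abs_pow]
            _ ≤ M ^ 2 + M * M + M ^ 2 := by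
                gcongr <;> first | exact abs_nonneg _ | assumption
            _ = 3 * M ^ 2 := by ring
        have h3 : |p + q| ≤ 2 * M := by
          calc |p + q| ≤ |p| + |q| := abs_add_le _ _
            _ ≤ M + M := add_le_add hp hq
            _ = 2 * M := by ring
        gcongr
    _ = 3 * a * M ^ 2 + 2 * |b| * M + |c| := by ring

/-- Barrier lemma: if the derivative is negative whenever the solution is `≥ M`,
and it starts below `M`, then it stays below `M`. -/
lemma barrier {T M : ℝ} (hT : 0 < T) {x d : ℝ → ℝ}
    (hx : ∀ t ∈ Icc (0 : ℝ) T, HasDerivWithinAt x (d t) (Icc (0 : ℝ) T) t)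
    (h0 : x 0 < M) (hd : ∀ t ∈ Icc (0 : ℝ) T, M ≤ x t → d t < 0) :
    ∀ t ∈ Icc (0 : ℝ) T, x t < M := by
  by_contra hcon
  push_neg at hcon
  obtain ⟨t1, ht1, hMt1⟩ := hcon
  have hxc : ContinuousOn x (Icc 0 T) := fun t ht => (hx t ht).continuousWithinAt
  set S : Set ℝ := {t | t ∈ Icc (0 : ℝ) T ∧ M ≤ x t} with hS
  have hSeq : S = Icc 0 T ∩ x ⁻¹' (Ici M) := by
    ext t; simp [hS, mem_Ici, and_comm]
  have hSne : S.Nonempty := ⟨t1, ht1, hMt1⟩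
  have hSc : IsClosed S := by
    rw [hSeq]
    exact hxc.preimage_isClosed_of_isClosed isClosed_Icc isClosed_Ici
  have hbdd : BddBelow S := ⟨0, fun t ht => ht.1.1⟩
  set τ := sInf S with hτ
  have hτS : τ ∈ S := hSc.csInf_mem hSne hbdd
  have hτIcc : τ ∈ Icc (0 : ℝ) T := hτS.1
  have hτM : M ≤ x τ := hτS.2
  have hτpos : 0 < τ := by
    rcases eq_or_lt_of_le hτIcc.1 with h | h
    · exact absurd hτM (by rw [← h]; exact not_le.2 h0)
    · exact h
  have hlt : ∀ t ∈ Ico (0 : ℝ) τ, x t < M := by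
    intro t ht
    by_contra hge
    push_neg at hge
    have htS : t ∈ S := ⟨⟨ht.1, ht.2.le.trans hτIcc.2⟩, hge⟩
    exact absurd (csInf_le hbdd htS) (not_le.2 ht.2)
  have hne : (nhdsWithin τ (Ico (0 : ℝ) τ)).NeBot := by
    rw [← mem_closure_iff_nhdsWithin_neBot, closure_Ico (ne_of_lt hτpos)]
    exact ⟨hτpos.le, le_refl τ⟩
  have hsub : Ico (0 : ℝ) τ ⊆ Icc (0 : ℝ) T \ {τ} := fun t ht =>
    ⟨⟨ht.1, ht.2.le.trans hτIcc.2⟩, ne_of_lt ht.2⟩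
  have hder := hx τ hτIcc
  rw [hasDerivWithinAt_iff_tendsto_slope] at hder
  have htend : Filter.Tendsto (slope x τ) (nhdsWithin τ (Ico (0 : ℝ) τ)) (nhds (d τ)) :=
    hder.mono_left (nhdsWithin_mono τ hsub)
  have hnon : ∀ᶠ t in nhdsWithin τ (Ico (0 : ℝ) τ), 0 ≤ slope x τ t := by
    filter_upwards [self_mem_nhdsWithin] with t ht
    have h1 : x t - x τ < 0 := sub_neg.2 (lt_of_lt_of_le (hlt t ht) hτM)
    have h2 : t - τ < 0 := sub_neg.2 ht.2
    rw [slope_def_field]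
    exact (div_pos_of_neg_of_neg h1 h2).le
  exact absurd (hd τ hτIcc hτM) (not_lt.2 (ge_of_tendsto htend hnon))

/-- Global existence and uniqueness on `[0,T]` of the solution of the noise-free
cubic equation of Example 1: `x' = −a·x³ − b·x² − c·x + h(t)`, `x(0) = x₀`,
with `a > 0` and continuous forcing `h`. -/
theorem stmt_11 (a b c : ℝ) (ha : 0 < a) (h : ℝ → ℝ) (hh : Continuous h)
    (x₀ T : ℝ) (hT : 0 < T) :
    (∃ x : ℝ → ℝ, x 0 = x₀ ∧ ∀ t ∈ Icc (0 : ℝ) T,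
      HasDerivWithinAt x
        (-a * (x t) ^ 3 - b * (x t) ^ 2 - c * x t + h t) (Icc (0 : ℝ) T) t) ∧
    (∀ x y : ℝ → ℝ,
      (x 0 = x₀ ∧ ∀ t ∈ Icc (0 : ℝ) T,
        HasDerivWithinAt x
          (-a * (x t) ^ 3 - b * (x t) ^ 2 - c * x t + h t) (Icc (0 : ℝ) T) t) →
      (y 0 = x₀ ∧ ∀ t ∈ Icc (0 : ℝ) T,
        HasDerivWithinAt y
          (-a * (y t) ^ 3 - b * (y t) ^ 2 - c * y t + h t) (Icc (0 : ℝ) T) t) →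
      ∀ t ∈ Icc (0 : ℝ) T, x t = y t) := by
  constructor
  · -- Existence
    obtain ⟨H0, hH0⟩ := (isCompact_Icc : IsCompact (Icc (0 : ℝ) T)).exists_bound_of_continuousOn
      hh.continuousOn
    obtain ⟨H, hHdef⟩ : ∃ v : ℝ, v = max H0 0 := ⟨_, rfl⟩
    have hH : ∀ t ∈ Icc (0 : ℝ) T, |h t| ≤ H := fun t ht => by
      rw [hHdef]; exact (Real.norm_eq_abs (h t) ▸ hH0 t ht).trans (le_max_left _ _)
    have hHnn : 0 ≤ H := hHdef ▸ le_max_right _ _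
    obtain ⟨M, hMdef⟩ : ∃ v : ℝ, v = max |x₀| 1 + (|b| + |c| + H) / a + 1 := ⟨_, rfl⟩
    have hq0 : 0 ≤ (|b| + |c| + H) / a := by positivity
    have hmax1 := le_max_right |x₀| 1
    have hmaxx := le_max_left |x₀| 1
    have hM1 : 1 ≤ M := by rw [hMdef]; linarith
    have hMpos : 0 < M := lt_of_lt_of_le one_pos hM1
    have hMx : |x₀| < M := by rw [hMdef]; linarith
    have hkey : |b| + |c| + H < a * M := by
      have hlt : (|b| + |c| + H) / a < M := by rw [hMdef]; linarith
      calc |b| + |c| + H = a * ((|b| + |c| + H) / a) := (mul_div_cancel₀ _ (ne_of_gt ha)).symm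
        _ < a * M := mul_lt_mul_of_pos_left hlt ha
    have hMM : M ≤ M ^ 2 := by nlinarith
    have hM2 : 1 ≤ M ^ 2 := by nlinarith
    have f1 : (|b| + |c| + H) * M ^ 2 < a * M * M ^ 2 :=
      mul_lt_mul_of_pos_right hkey (by positivity)
    have f4 : |c| * M ≤ |c| * M ^ 2 := mul_le_mul_of_nonneg_left hMM (abs_nonneg c)
    have f5 : H ≤ H * M ^ 2 := le_mul_of_one_le_right hHnn hM2
    have hbndU : ∀ t ∈ Icc (0 : ℝ) T, -a * M ^ 3 - b * M ^ 2 - c * M + h t < 0 := by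
      intro t ht
      have h1 := (abs_le.1 (hH t ht)).2
      have f2 : -|b| * M ^ 2 ≤ b * M ^ 2 :=
        mul_le_mul_of_nonneg_right (neg_abs_le b) (sq_nonneg M)
      have f3 : -|c| * M ≤ c * M := mul_le_mul_of_nonneg_right (neg_abs_le c) hMpos.le
      nlinarith [f1, f2, f3, f4, f5]
    have hbndL : ∀ t ∈ Icc (0 : ℝ) T, 0 < -a * (-M) ^ 3 - b * (-M) ^ 2 - c * (-M) + h t := by
      intro t ht
      have h1 := (abs_le.1 (hH t ht)).1
      have f2 : b * M ^ 2 ≤ |b| * M ^ 2 :=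
        mul_le_mul_of_nonneg_right (le_abs_self b) (sq_nonneg M)
      have f3 : -c * M ≤ |c| * M := mul_le_mul_of_nonneg_right (neg_le_abs c) hMpos.le
      nlinarith [f1, f2, f3, f4, f5]
    obtain ⟨clamp, hclampdef⟩ : ∃ f : ℝ → ℝ, f = fun z => max (-M) (min M z) := ⟨_, rfl⟩
    have hclamp_abs : ∀ z, |clamp z| ≤ M := by
      intro z
      rw [hclampdef, abs_le]
      exact ⟨le_max_left _ _, max_le (by linarith) (min_le_left _ _)⟩
    have hclamp_eq : ∀ z, |z| ≤ M → clamp z = z := by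
      intro z hz
      obtain ⟨h1, h2⟩ := abs_le.1 hz
      rw [hclampdef]
      simp only
      rw [min_eq_right h2, max_eq_right h1]
    have hclamp_hi : ∀ z, M ≤ z → clamp z = M := by
      intro z hz
      rw [hclampdef]
      simp only
      rw [min_eq_left hz, max_eq_right (by linarith : -M ≤ M)]
    have hclamp_lo : ∀ z, z ≤ -M → clamp z = -M := by
      intro z hz
      rw [hclampdef]
      simp only
      rw [min_eq_right (by linarith : z ≤ M), max_eq_left hz]
    have hclamp_lip : ∀ z w, |clamp z - clamp w| ≤ |z - w| := by
      intro z w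
      rw [hclampdef]
      simp only
      rw [max_comm (-M) (min M z), max_comm (-M) (min M w)]
      refine (abs_max_sub_max_le_abs _ _ _).trans ?_
      refine (abs_min_sub_min_le_max M z M w).trans ?_
      simp
    obtain ⟨K, hKdef⟩ : ∃ v : ℝ, v = 3 * a * M ^ 2 + 2 * |b| * M + |c| := ⟨_, rfl⟩
    have hK0 : 0 ≤ K := by rw [hKdef]; positivity
    obtain ⟨C, hCdef⟩ : ∃ v : ℝ, v = a * M ^ 3 + |b| * M ^ 2 + |c| * M + H := ⟨_, rfl⟩
    have hC0 : 0 ≤ C := by rw [hCdef]; positivity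
    set F : ℝ → ℝ → ℝ := fun t z =>
      -a * (clamp z) ^ 3 - b * (clamp z) ^ 2 - c * clamp z + h t with hFdef
    have hgbound : ∀ p, |p| ≤ M → |(-a * p ^ 3 - b * p ^ 2 - c * p)| ≤
        a * M ^ 3 + |b| * M ^ 2 + |c| * M := by
      intro p hp
      have h1 : -a * p ^ 3 - b * p ^ 2 - c * p = -(a * p ^ 3) + -(b * p ^ 2) + -(c * p) := by
        ring
      calc |(-a * p ^ 3 - b * p ^ 2 - c * p)|
          ≤ |a * p ^ 3| + |b * p ^ 2| + |c * p| := by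
            rw [h1, ← abs_neg (a * p ^ 3), ← abs_neg (b * p ^ 2), ← abs_neg (c * p)]
            exact abs_add_three _ _ _
        _ = a * |p| ^ 3 + |b| * |p| ^ 2 + |c| * |p| := by
            rw [abs_mul, abs_mul, abs_mul, abs_pow, abs_pow, abs_of_nonneg ha.le]
        _ ≤ a * M ^ 3 + |b| * M ^ 2 + |c| * M := by
            gcongr <;> first | exact abs_nonneg _ | exact hp
    have hFbound : ∀ t ∈ Icc (0 : ℝ) T, ∀ z : ℝ, |F t z| ≤ C := by
      intro t ht z
      have h1 : F t z = (-a * (clamp z) ^ 3 - b * (clamp z) ^ 2 - c * clamp z) + h t := by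
        simp only [hFdef]
      rw [h1, hCdef]
      calc |(-a * (clamp z) ^ 3 - b * (clamp z) ^ 2 - c * clamp z) + h t|
          ≤ |(-a * (clamp z) ^ 3 - b * (clamp z) ^ 2 - c * clamp z)| + |h t| := abs_add_le _ _
        _ ≤ (a * M ^ 3 + |b| * M ^ 2 + |c| * M) + H :=
            add_le_add (hgbound _ (hclamp_abs z)) (hH t ht)
        _ = a * M ^ 3 + |b| * M ^ 2 + |c| * M + H := by ring
    have hpl : IsPicardLindelof F (tmin := 0) (tmax := T) ⟨0, le_refl 0, hT.le⟩ x₀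
        (C * T).toNNReal 0 C.toNNReal K.toNNReal := by
      refine ⟨?_, ?_, ?_, ?_⟩
      · intro t _
        refine LipschitzWith.lipschitzOnWith ?_
        refine LipschitzWith.of_dist_le_mul fun z w => ?_
        rw [Real.dist_eq, Real.dist_eq, Real.coe_toNNReal _ hK0]
        have h1 : F t z - F t w = (-a * (clamp z) ^ 3 - b * (clamp z) ^ 2 - c * clamp z) -
            (-a * (clamp w) ^ 3 - b * (clamp w) ^ 2 - c * clamp w) := by
          simp only [hFdef]; ring
        rw [h1]
        calc |(-a * (clamp z) ^ 3 - b * (clamp z) ^ 2 - c * clamp z) -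
            (-a * (clamp w) ^ 3 - b * (clamp w) ^ 2 - c * clamp w)|
            ≤ K * |clamp z - clamp w| := by
              rw [hKdef]; exact cubicLip a b c M ha.le (hclamp_abs z) (hclamp_abs w)
          _ ≤ K * |z - w| := mul_le_mul_of_nonneg_left (hclamp_lip z w) hK0
      · intro z _
        have h1 : (fun t => F t z) = fun t =>
            (-a * (clamp z) ^ 3 - b * (clamp z) ^ 2 - c * clamp z) + h t := by
          funext t; simp only [hFdef]
        rw [h1]
        exact (continuous_const.add hh).continuousOn
      · intro t ht z _
        rw [Real.norm_eq_abs, Real.coe_toNNReal _ hC0]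
        exact hFbound t ht z
      · simp [Real.coe_toNNReal _ hC0, Real.coe_toNNReal _ (mul_nonneg hC0 hT.le), hT.le]
    obtain ⟨x, hx0, hx⟩ := hpl.exists_eq_forall_mem_Icc_hasDerivWithinAt₀
    replace hx0 : x 0 = x₀ := hx0
    have hup : ∀ t ∈ Icc (0 : ℝ) T, x t < M := by
      refine barrier hT hx ?_ ?_
      · rw [hx0]; exact (le_abs_self x₀).trans_lt hMx
      · intro t ht hMle
        have h1 : F t (x t) = -a * M ^ 3 - b * M ^ 2 - c * M + h t := by
          simp only [hFdef]; rw [hclamp_hi _ hMle]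
        rw [h1]
        exact hbndU t ht
    have hlo : ∀ t ∈ Icc (0 : ℝ) T, -M < x t := by
      have hbar : ∀ t ∈ Icc (0 : ℝ) T, (fun s => -x s) t < M := by
        refine barrier hT (x := fun s => -x s) (d := fun s => -F s (x s))
          (fun t ht => (hx t ht).neg) ?_ ?_
        · show -x 0 < M
          rw [hx0]; exact (neg_le_abs x₀).trans_lt hMx
        · intro t ht hMle
          have hMle' : M ≤ -x t := hMle
          have hxle : x t ≤ -M := by linarith
          have h1 : F t (x t) = -a * (-M) ^ 3 - b * (-M) ^ 2 - c * (-M) + h t := by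
            simp only [hFdef]; rw [hclamp_lo _ hxle]
          have h2 := hbndL t ht
          rw [← h1] at h2
          show -F t (x t) < 0
          linarith
      intro t ht
      have h2 : -x t < M := hbar t ht
      linarith
    refine ⟨x, hx0, fun t ht => ?_⟩
    have hxt : |x t| ≤ M := abs_le.2 ⟨(hlo t ht).le, (hup t ht).le⟩
    have hd := hx t ht
    have h1 : F t (x t) = -a * (x t) ^ 3 - b * (x t) ^ 2 - c * x t + h t := by
      simp only [hFdef]; rw [hclamp_eq _ hxt]
    rwa [h1] at hd
  · -- Uniqueness
    rintro x y ⟨hx0, hx⟩ ⟨hy0, hy⟩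
    have hxc : ContinuousOn x (Icc 0 T) := fun t ht => (hx t ht).continuousWithinAt
    have hyc : ContinuousOn y (Icc 0 T) := fun t ht => (hy t ht).continuousWithinAt
    obtain ⟨R1, hR1⟩ := isCompact_Icc.exists_bound_of_continuousOn hxc
    obtain ⟨R2, hR2⟩ := isCompact_Icc.exists_bound_of_continuousOn hyc
    obtain ⟨R, hRdef⟩ : ∃ v : ℝ, v = max R1 R2 := ⟨_, rfl⟩
    have hR0 : 0 ≤ R := by
      rw [hRdef]
      exact (norm_nonneg (x 0)).trans ((hR1 0 ⟨le_refl 0, hT.le⟩).trans (le_max_left _ _))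
    obtain ⟨K, hKdef⟩ : ∃ v : ℝ, v = 3 * a * R ^ 2 + 2 * |b| * R + |c| := ⟨_, rfl⟩
    have hK0 : 0 ≤ K := by rw [hKdef]; positivity
    have hmemx : ∀ t ∈ Icc (0 : ℝ) T, x t ∈ closedBall (0 : ℝ) R := fun t ht =>
      mem_closedBall_zero_iff.2 ((hR1 t ht).trans (hRdef ▸ le_max_left _ _))
    have hmemy : ∀ t ∈ Icc (0 : ℝ) T, y t ∈ closedBall (0 : ℝ) R := fun t ht =>
      mem_closedBall_zero_iff.2 ((hR2 t ht).trans (hRdef ▸ le_max_right _ _))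
    have hlip : ∀ t : ℝ, LipschitzOnWith K.toNNReal
        (fun z => -a * z ^ 3 - b * z ^ 2 - c * z + h t) (closedBall (0 : ℝ) R) := by
      intro t
      refine LipschitzOnWith.of_dist_le_mul fun z hz w hw => ?_
      rw [Real.dist_eq, Real.dist_eq, Real.coe_toNNReal _ hK0]
      have hz' : |z| ≤ R := by rwa [mem_closedBall_zero_iff, Real.norm_eq_abs] at hz
      have hw' : |w| ≤ R := by rwa [mem_closedBall_zero_iff, Real.norm_eq_abs] at hw
      have h1 : (-a * z ^ 3 - b * z ^ 2 - c * z + h t) - (-a * w ^ 3 - b * w ^ 2 - c * w + h t)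
          = (-a * z ^ 3 - b * z ^ 2 - c * z) - (-a * w ^ 3 - b * w ^ 2 - c * w) := by ring
      rw [h1, hKdef]
      exact cubicLip a b c R ha.le hz' hw'
    have hx' : ∀ t ∈ Ico (0 : ℝ) T, HasDerivWithinAt x
        (-a * (x t) ^ 3 - b * (x t) ^ 2 - c * x t + h t) (Ici t) t := by
      intro t ht
      refine (hx t (Ico_subset_Icc_self ht)).mono_of_mem_nhdsWithin ?_
      rw [mem_nhdsWithin]
      exact ⟨Iio T, isOpen_Iio, ht.2, fun u hu => ⟨ht.1.trans hu.2, hu.1.le⟩⟩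
    have hy' : ∀ t ∈ Ico (0 : ℝ) T, HasDerivWithinAt y
        (-a * (y t) ^ 3 - b * (y t) ^ 2 - c * y t + h t) (Ici t) t := by
      intro t ht
      refine (hy t (Ico_subset_Icc_self ht)).mono_of_mem_nhdsWithin ?_
      rw [mem_nhdsWithin]
      exact ⟨Iio T, isOpen_Iio, ht.2, fun u hu => ⟨ht.1.trans hu.2, hu.1.le⟩⟩
    exact fun t ht => ODE_solution_unique_of_mem_Icc_right
      (v := fun t z => -a * z ^ 3 - b * z ^ 2 - c * z + h t)
      (s := fun _ => closedBall (0 : ℝ) R) (fun t _ => hlip t) hxc hx'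
      (fun t ht => hmemx t (Ico_subset_Icc_self ht)) hyc hy'
      (fun t ht => hmemy t (Ico_subset_Icc_self ht)) (hx0.trans hy0.symm) ht
end
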